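/- Let (p_x)_{x≥0} and (q_x)_{x≥1} be sequences in (0,1) with p_0 = 1 and p_x + q_x = 1 for x ≥ 1, and set π̃(0) = 1, π̃(x) = ∏_{k=1}^{x} p_{k−1}/q_k for x ≥ 1. If lim_{x→∞} p_x = p, lim_{x→∞} q_x = q and p < q, then δ := sup_{x≥1} ( ∑_{y=0}^{x−1} [π̃(y) p_y]^{−1} ) · ( ∑_{z=x}^{∞} π̃(z) ) < ∞. -/

import Mathlib

open Filter
open scoped ENNReal

/-- For a birth and death chain with `p₀ = 1`, `pₓ + qₓ = 1`, reversible measure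
`π̃(x) = ∏_{k=1}^x p_{k-1}/q_k`, if `pₓ → p`, `qₓ → q` with `p < q`, then Chen's constant
`δ := sup_{x ≥ 1} (∑_{y=0}^{x-1} [π̃(y) p_y]⁻¹) · (∑_{z=x}^∞ π̃(z))` is finite. -/
theorem stmt5 (p q : ℕ → ℝ) (hp0 : p 0 = 1)
    (hp : ∀ x ≥ 1, 0 < p x ∧ p x < 1)
    (hq : ∀ x ≥ 1, 0 < q x ∧ q x < 1)
    (hpq : ∀ x ≥ 1, p x + q x = 1)
    (πt : ℕ → ℝ)
    (hπt : ∀ x, πt x = ∏ k ∈ Finset.Icc 1 x, p (k - 1) / q k)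
    (pl ql : ℝ)
    (hpl : Tendsto p atTop (nhds pl))
    (hql : Tendsto q atTop (nhds ql))
    (hlt : pl < ql) :
    (⨆ (x : ℕ) (_ : 1 ≤ x),
        (∑ y ∈ Finset.range x, ENNReal.ofReal ((πt y * p y)⁻¹)) *
          ∑' z : ℕ, if x ≤ z then ENNReal.ofReal (πt z) else 0) < ⊤ := by
  -- positivity facts
  have hppos : ∀ x, 0 < p x := by
    intro x
    rcases Nat.eq_zero_or_pos x with h | h
    · simp [h, hp0]
    · exact (hp x h).1
  have hqpos : ∀ x, 1 ≤ x → 0 < q x := fun x hx => (hq x hx).1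
  have hπpos : ∀ x, 0 < πt x := by
    intro x
    rw [hπt]
    apply Finset.prod_pos
    intro k hk
    exact div_pos (hppos _) (hqpos k (Finset.mem_Icc.mp hk).1)
  have hπsucc : ∀ x, πt (x + 1) = πt x * (p x / q (x + 1)) := by
    intro x
    rw [hπt, hπt, Finset.prod_Icc_succ_top (Nat.le_add_left 1 x)]
    simp
  -- limits
  have hsum1 : pl + ql = 1 := by
    have h1 : Tendsto (fun x => p x + q x) atTop (nhds (pl + ql)) := hpl.add hql
    have heq : (fun _ : ℕ => (1 : ℝ)) =ᶠ[atTop] fun x => p x + q x := by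
      filter_upwards [eventually_ge_atTop 1] with x hx
      exact (hpq x hx).symm
    exact tendsto_nhds_unique h1 (tendsto_const_nhds.congr' heq)
  have hpl0 : 0 ≤ pl := ge_of_tendsto hpl (Eventually.of_forall fun x => (hppos x).le)
  have hql0 : 0 < ql := by linarith
  set r : ℝ := pl / ql with hr_def
  have hr0 : 0 ≤ r := div_nonneg hpl0 hql0.le
  have hr1 : r < 1 := (div_lt_one hql0).mpr hlt
  set θ : ℝ := (r + 1) / 2 with hθ_def
  have hθ0 : 0 < θ := by rw [hθ_def]; linarith
  have hθ1 : θ < 1 := by rw [hθ_def]; linarith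
  have hrθ : r < θ := by rw [hθ_def]; linarith
  -- eventual bounds
  have htendratio : Tendsto (fun x => p x / q (x + 1)) atTop (nhds r) := by
    exact (hpl.div (hql.comp (tendsto_add_atTop_nat 1)) hql0.ne')
  have hev1 : ∀ᶠ x in atTop, p x / q (x + 1) ≤ θ := by
    filter_upwards [htendratio.eventually_lt_const hrθ] with x hx using hx.le
  have hev2 : ∀ᶠ x in atTop, ql / 2 ≤ q x := by
    filter_upwards [hql.eventually_const_lt (by linarith : ql / 2 < ql)] with x hx using hx.le
  obtain ⟨N₀, hN₀⟩ := (hev1.and hev2).exists_forall_of_atTop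
  set N : ℕ := max N₀ 1 with hN_def
  have hN : ∀ x, N ≤ x → p x / q (x + 1) ≤ θ ∧ ql / 2 ≤ q x := by
    intro x hx
    exact hN₀ x (le_trans (le_max_left _ _) hx)
  -- geometric decay
  have hdecay : ∀ y, N ≤ y → ∀ m, πt (y + m) ≤ πt y * θ ^ m := by
    intro y hy m
    induction m with
    | zero => simp
    | succ m ih =>
      have h1 : πt (y + m + 1) = πt (y + m) * (p (y + m) / q (y + m + 1)) := hπsucc (y + m)
      have h2 : p (y + m) / q (y + m + 1) ≤ θ := (hN (y + m) (le_trans hy (Nat.le_add_right y m))).1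
      have h3 : 0 ≤ p (y + m) / q (y + m + 1) :=
        div_nonneg (hppos _).le (hqpos _ (Nat.le_add_left 1 _)).le
      calc πt (y + m + 1) = πt (y + m) * (p (y + m) / q (y + m + 1)) := by
            rw [h1]
        _ ≤ (πt y * θ ^ m) * θ := by
            apply mul_le_mul ih h2 h3
            exact mul_nonneg (hπpos y).le (pow_nonneg hθ0.le m)
        _ = πt y * θ ^ (m + 1) := by ring
  have hdecay' : ∀ y x, N ≤ y → y ≤ x → πt x ≤ πt y * θ ^ (x - y) := by
    intro y x hy hyx
    have := hdecay y hy (x - y)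
    rwa [Nat.add_sub_cancel' hyx] at this
  -- constants
  set C1 : ℝ := ∑ y ∈ Finset.range N, (πt y * p y)⁻¹ with hC1_def
  set B : ℝ := (2 / ql) * (1 - θ)⁻¹ with hB_def
  set M : ℝ := (∑ z ∈ Finset.range N, πt z) + πt N * (1 - θ)⁻¹ with hM_def
  set K : ℝ := max (C1 * M) ((C1 * πt N + B) * (1 - θ)⁻¹) with hK_def
  have hC1_0 : 0 ≤ C1 :=
    Finset.sum_nonneg fun y _ => inv_nonneg.mpr (mul_nonneg (hπpos y).le (hppos y).le)
  have h1θ : 0 < 1 - θ := by linarith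
  have hB0 : 0 ≤ B :=
    mul_nonneg (div_nonneg (by norm_num) hql0.le) (inv_nonneg.mpr h1θ.le)
  have hM0 : 0 ≤ M :=
    add_nonneg (Finset.sum_nonneg fun z _ => (hπpos z).le)
      (mul_nonneg (hπpos N).le (inv_nonneg.mpr h1θ.le))
  -- geometric partial sum bound
  have hgeo : ∀ n : ℕ, ∑ i ∈ Finset.range n, θ ^ i ≤ (1 - θ)⁻¹ := by
    intro n
    calc ∑ i ∈ Finset.range n, θ ^ i ≤ ∑' i : ℕ, θ ^ i :=
          Summable.sum_le_tsum _ (fun i _ => pow_nonneg hθ0.le i) (summable_geometric_of_lt_one hθ0.le hθ1)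
      _ = (1 - θ)⁻¹ := tsum_geometric_of_lt_one hθ0.le hθ1
  -- tail bound for x ≥ N
  have htail : ∀ x, N ≤ x → ∀ t : Finset ℕ, (∀ z ∈ t, x ≤ z) →
      ∑ z ∈ t, πt z ≤ πt x * (1 - θ)⁻¹ := by
    intro x hx t ht
    have step1 : ∑ z ∈ t, πt z ≤ ∑ z ∈ t, πt x * θ ^ (z - x) := by
      apply Finset.sum_le_sum
      intro z hz
      exact hdecay' x z hx (ht z hz)
    have step2 : ∑ z ∈ t, θ ^ (z - x) ≤ (1 - θ)⁻¹ := by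
      have hinj : ∀ z1 ∈ t, ∀ z2 ∈ t, z1 - x = z2 - x → z1 = z2 := by
        intro z1 h1 z2 h2 h
        have := ht z1 h1; have := ht z2 h2; omega
      have himg : ∑ n ∈ t.image (· - x), θ ^ n = ∑ z ∈ t, θ ^ (z - x) :=
        Finset.sum_image hinj
      rw [← himg]
      calc ∑ n ∈ t.image (· - x), θ ^ n ≤ ∑' n : ℕ, θ ^ n :=
            Summable.sum_le_tsum _ (fun i _ => pow_nonneg hθ0.le i) (summable_geometric_of_lt_one hθ0.le hθ1)
        _ = (1 - θ)⁻¹ := tsum_geometric_of_lt_one hθ0.le hθ1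
    calc ∑ z ∈ t, πt z ≤ ∑ z ∈ t, πt x * θ ^ (z - x) := step1
      _ = πt x * ∑ z ∈ t, θ ^ (z - x) := by rw [Finset.mul_sum]
      _ ≤ πt x * (1 - θ)⁻¹ := by
          apply mul_le_mul_of_nonneg_left step2 (hπpos x).le
  -- tail bound for general x (bounded by M)
  have htailM : ∀ t : Finset ℕ, ∑ z ∈ t, πt z ≤ M := by
    intro t
    classical
    have hsplit : ∑ z ∈ t, πt z =
        ∑ z ∈ t.filter (· < N), πt z + ∑ z ∈ t.filter (fun z => ¬ z < N), πt z :=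
      (Finset.sum_filter_add_sum_filter_not t _ _).symm
    have h1 : ∑ z ∈ t.filter (· < N), πt z ≤ ∑ z ∈ Finset.range N, πt z := by
      apply Finset.sum_le_sum_of_subset_of_nonneg
      · intro z hz
        simp only [Finset.mem_filter] at hz
        exact Finset.mem_range.mpr hz.2
      · intro z _ _; exact (hπpos z).le
    have h2 : ∑ z ∈ t.filter (fun z => ¬ z < N), πt z ≤ πt N * (1 - θ)⁻¹ := by
      apply htail N le_rfl
      intro z hz
      simp only [Finset.mem_filter] at hz
      omega
    rw [hsplit, hM_def]
    linarith
  -- F bound for x ≥ N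
  have hF : ∀ x, N ≤ x →
      ∑ y ∈ Finset.range x, (πt y * p y)⁻¹ ≤ C1 + B * (πt x)⁻¹ := by
    intro x hx
    have hsplit : ∑ y ∈ Finset.range x, (πt y * p y)⁻¹ =
        C1 + ∑ y ∈ Finset.Ico N x, (πt y * p y)⁻¹ := by
      rw [hC1_def, Finset.range_eq_Ico, Finset.range_eq_Ico]
      exact (Finset.sum_Ico_consecutive _ (Nat.zero_le N) hx).symm
    have hterm : ∀ y ∈ Finset.Ico N x,
        (πt y * p y)⁻¹ ≤ (2 / ql) * (θ ^ (x - (y + 1)) * (πt x)⁻¹) := by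
      intro y hy
      obtain ⟨hy1, hy2⟩ := Finset.mem_Ico.mp hy
      have hq1 : q (y + 1) ≠ 0 := (hqpos (y + 1) (Nat.le_add_left 1 y)).ne'
      have hid : πt y * p y = πt (y + 1) * q (y + 1) := by
        rw [hπsucc y]; field_simp
      have hd : πt x ≤ πt (y + 1) * θ ^ (x - (y + 1)) :=
        hdecay' (y + 1) x (le_trans hy1 (Nat.le_succ y)) hy2
      have hπ1 : 0 < πt (y + 1) := hπpos (y + 1)
      have hqb : ql / 2 ≤ q (y + 1) := (hN (y + 1) (le_trans hy1 (Nat.le_succ y))).2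
      have hπinv : (πt (y + 1))⁻¹ ≤ θ ^ (x - (y + 1)) * (πt x)⁻¹ := by
        rw [inv_le_iff_one_le_mul₀ hπ1]
        calc (1 : ℝ) = πt x * (πt x)⁻¹ := (mul_inv_cancel₀ (hπpos x).ne').symm
          _ ≤ (πt (y + 1) * θ ^ (x - (y + 1))) * (πt x)⁻¹ :=
              mul_le_mul_of_nonneg_right hd (inv_nonneg.mpr (hπpos x).le)
          _ = θ ^ (x - (y + 1)) * (πt x)⁻¹ * πt (y + 1) := by ring
      have hqinv : (q (y + 1))⁻¹ ≤ 2 / ql := by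
        rw [inv_le_iff_one_le_mul₀ (hqpos _ (Nat.le_add_left 1 y))]
        have h2q : (2 / ql) * (ql / 2) = 1 := by field_simp
        have := mul_le_mul_of_nonneg_left hqb (div_nonneg (by norm_num : (0:ℝ) ≤ 2) hql0.le)
        linarith
      calc (πt y * p y)⁻¹ = (q (y + 1))⁻¹ * (πt (y + 1))⁻¹ := by
            rw [hid, mul_inv]; ring
        _ ≤ (2 / ql) * (θ ^ (x - (y + 1)) * (πt x)⁻¹) := by
            apply mul_le_mul hqinv hπinv (inv_nonneg.mpr hπ1.le)
              (div_nonneg (by norm_num) hql0.le)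
    have hsum : ∑ y ∈ Finset.Ico N x, (πt y * p y)⁻¹ ≤ B * (πt x)⁻¹ := by
      calc ∑ y ∈ Finset.Ico N x, (πt y * p y)⁻¹
          ≤ ∑ y ∈ Finset.Ico N x, (2 / ql) * (θ ^ (x - (y + 1)) * (πt x)⁻¹) :=
            Finset.sum_le_sum hterm
        _ = (2 / ql) * (πt x)⁻¹ * ∑ y ∈ Finset.Ico N x, θ ^ (x - (y + 1)) := by
            rw [Finset.mul_sum]; apply Finset.sum_congr rfl; intro y _; ring
        _ ≤ (2 / ql) * (πt x)⁻¹ * (1 - θ)⁻¹ := by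
            apply mul_le_mul_of_nonneg_left _
              (mul_nonneg (div_nonneg (by norm_num) hql0.le) (inv_nonneg.mpr (hπpos x).le))
            rw [Finset.sum_Ico_eq_sum_range]
            have : ∀ i ∈ Finset.range (x - N), θ ^ (x - (N + i + 1)) = θ ^ (x - N - 1 - i) := by
              intro i hi
              congr 1
              omega
            rw [Finset.sum_congr rfl this, Finset.sum_range_reflect (fun i => θ ^ i) (x - N)]
            exact hgeo _
        _ = B * (πt x)⁻¹ := by rw [hB_def]; ring
    rw [hsplit]
    linarith [hsum]
  -- now the ENNReal part
  have hfeq : ∀ x : ℕ, (∑ y ∈ Finset.range x, ENNReal.ofReal ((πt y * p y)⁻¹)) =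
      ENNReal.ofReal (∑ y ∈ Finset.range x, (πt y * p y)⁻¹) :=
    fun x => (ENNReal.ofReal_sum_of_nonneg fun y _ =>
      inv_nonneg.mpr (mul_nonneg (hπpos y).le (hppos y).le)).symm
  have hgle : ∀ (x : ℕ) (c : ℝ), (∀ t : Finset ℕ, (∀ z ∈ t, x ≤ z) → ∑ z ∈ t, πt z ≤ c) →
      (∑' z : ℕ, if x ≤ z then ENNReal.ofReal (πt z) else 0) ≤ ENNReal.ofReal c := by
    intro x c hc
    rw [ENNReal.tsum_eq_iSup_sum]
    apply iSup_le
    intro s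
    classical
    have h1 : ∑ z ∈ s, (if x ≤ z then ENNReal.ofReal (πt z) else 0) =
        ∑ z ∈ s.filter (x ≤ ·), ENNReal.ofReal (πt z) := (Finset.sum_filter _ _).symm
    rw [h1, ← ENNReal.ofReal_sum_of_nonneg (fun z _ => (hπpos z).le)]
    apply ENNReal.ofReal_le_ofReal
    apply hc
    intro z hz
    exact (Finset.mem_filter.mp hz).2
  -- main bound
  have hmain : ∀ x : ℕ, 1 ≤ x →
      (∑ y ∈ Finset.range x, ENNReal.ofReal ((πt y * p y)⁻¹)) *
        (∑' z : ℕ, if x ≤ z then ENNReal.ofReal (πt z) else 0) ≤ ENNReal.ofReal K := by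
    intro x hx
    rcases le_or_gt x N with hcase | hcase
    · -- x ≤ N
      have hF' : ∑ y ∈ Finset.range x, (πt y * p y)⁻¹ ≤ C1 := by
        apply Finset.sum_le_sum_of_subset_of_nonneg
          (Finset.range_subset_range.mpr hcase)
        intro y _ _
        exact inv_nonneg.mpr (mul_nonneg (hπpos y).le (hppos y).le)
      have hg' := hgle x M (fun t _ => htailM t)
      calc _ ≤ ENNReal.ofReal C1 * ENNReal.ofReal M := by
            apply mul_le_mul' _ hg'
            rw [hfeq x]
            exact ENNReal.ofReal_le_ofReal hF'
        _ = ENNReal.ofReal (C1 * M) := (ENNReal.ofReal_mul hC1_0).symm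
        _ ≤ ENNReal.ofReal K := ENNReal.ofReal_le_ofReal (le_max_left _ _)
    · -- x > N
      have hxN : N ≤ x := hcase.le
      have hF' := hF x hxN
      have hg' := hgle x (πt x * (1 - θ)⁻¹) (htail x hxN)
      have hπx : 0 < πt x := hπpos x
      have hπxN : πt x ≤ πt N := by
        have := hdecay' N x le_rfl hxN
        have hθpow : θ ^ (x - N) ≤ 1 := pow_le_one₀ hθ0.le hθ1.le
        nlinarith [hπpos N]
      calc _ ≤ ENNReal.ofReal (C1 + B * (πt x)⁻¹) * ENNReal.ofReal (πt x * (1 - θ)⁻¹) := by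
            apply mul_le_mul' _ hg'
            rw [hfeq x]
            exact ENNReal.ofReal_le_ofReal hF'
        _ = ENNReal.ofReal ((C1 + B * (πt x)⁻¹) * (πt x * (1 - θ)⁻¹)) :=
            (ENNReal.ofReal_mul (add_nonneg hC1_0
              (mul_nonneg hB0 (inv_nonneg.mpr (hπpos x).le)))).symm
        _ ≤ ENNReal.ofReal K := by
            apply ENNReal.ofReal_le_ofReal
            have heq : (C1 + B * (πt x)⁻¹) * (πt x * (1 - θ)⁻¹) =
                (C1 * πt x + B * ((πt x)⁻¹ * πt x)) * (1 - θ)⁻¹ := by ring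
            rw [heq, inv_mul_cancel₀ hπx.ne', mul_one]
            apply le_trans _ (le_max_right (C1 * M) _)
            apply mul_le_mul_of_nonneg_right _ (inv_nonneg.mpr h1θ.le)
            nlinarith
  calc (⨆ (x : ℕ) (_ : 1 ≤ x),
        (∑ y ∈ Finset.range x, ENNReal.ofReal ((πt y * p y)⁻¹)) *
          ∑' z : ℕ, if x ≤ z then ENNReal.ofReal (πt z) else 0)
      ≤ ENNReal.ofReal K := by
        apply iSup_le; intro x; apply iSup_le; intro hx; exact hmain x hx
    _ < ⊤ := ENNReal.ofReal_lt_top
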